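/- Let K and H be complex Hilbert spaces and let T : K → H be a nonzero bounded operator with closed range. If S : H → K is a bounded operator satisfying the Moore–Penrose equations TST = T, STS = S, (TS)* = TS and (ST)* = ST, then ‖S‖ = 1/γ(T). -/

import Mathlib

noncomputable section

/-- The reduced minimum modulus `γ(T)`. -/
def rmm {X Y : Type*} [NormedAddCommGroup X] [InnerProductSpace ℂ X]
    [NormedAddCommGroup Y] [InnerProductSpace ℂ Y] (T : X →L[ℂ] Y) : ℝ :=
  sInf ((fun ξ => ‖T ξ‖ / Metric.infDist ξ (LinearMap.ker (T : X →ₗ[ℂ] Y) : Set X)) ''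
    {ξ : X | ξ ∉ LinearMap.ker (T : X →ₗ[ℂ] Y)})

end

theorem stmt_10 (K H : Type)
    [NormedAddCommGroup K] [InnerProductSpace ℂ K] [CompleteSpace K]
    [NormedAddCommGroup H] [InnerProductSpace ℂ H] [CompleteSpace H]
    (T : K →L[ℂ] H) (hT : T ≠ 0) (hcl : IsClosed (LinearMap.range (T : K →ₗ[ℂ] H) : Set H))
    (S : H →L[ℂ] K)
    (h1 : T.comp (S.comp T) = T) (h2 : S.comp (T.comp S) = S)
    (h3 : IsSelfAdjoint (T.comp S)) (h4 : IsSelfAdjoint (S.comp T)) :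
    ‖S‖ = 1 / rmm T := by
  classical
  have hS0 : S ≠ 0 := by
    rintro rfl
    apply hT
    rw [← h1]
    ext x; simp
  have hSpos : 0 < ‖S‖ := norm_pos_iff.mpr hS0
  set N : Set K := (LinearMap.ker (T : K →ₗ[ℂ] H) : Set K) with hNdef
  have hNc : IsClosed N := ContinuousLinearMap.isClosed_ker T
  have hN0 : (0 : K) ∈ N := (LinearMap.ker (T : K →ₗ[ℂ] H)).zero_mem
  have hNne : N.Nonempty := ⟨0, hN0⟩
  have hTST : ∀ x, T (S (T x)) = T x := fun x => by
    have := ContinuousLinearMap.ext_iff.mp h1 x; simpa using this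
  have hSTS : ∀ y, S (T (S y)) = S y := fun y => by
    have := ContinuousLinearMap.ext_iff.mp h2 y; simpa using this
  have hadj4 : ContinuousLinearMap.adjoint (S.comp T) = S.comp T :=
    ContinuousLinearMap.isSelfAdjoint_iff'.mp h4
  -- range of S is orthogonal to ker T
  have horth : ∀ (y : H) (n : K), n ∈ LinearMap.ker (T : K →ₗ[ℂ] H) → (inner ℂ (S y) n : ℂ) = 0 := by
    intro y n hn
    have hn' : T n = 0 := hn
    calc (inner ℂ (S y) n : ℂ) = inner ℂ ((S.comp T) (S y)) n := by
          rw [ContinuousLinearMap.comp_apply, hSTS]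
      _ = inner ℂ ((ContinuousLinearMap.adjoint (S.comp T)) (S y)) n := by rw [hadj4]
      _ = inner ℂ (S y) ((S.comp T) n) := ContinuousLinearMap.adjoint_inner_left _ _ _
      _ = 0 := by rw [ContinuousLinearMap.comp_apply, hn', map_zero, inner_zero_right]
  -- distance from S y to ker T equals ‖S y‖
  have hdist : ∀ y : H, Metric.infDist (S y) N = ‖S y‖ := by
    intro y
    refine le_antisymm ?_ ?_
    · simpa using Metric.infDist_le_dist_of_mem hN0
    · rw [Metric.infDist_eq_iInf]
      haveI : Nonempty N := hNne.to_subtype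
      refine le_ciInf fun n => ?_
      rw [dist_eq_norm]
      have hsq : ‖S y‖ ^ 2 ≤ ‖S y - (n : K)‖ ^ 2 := by
        have h0 : (inner ℂ (S y) (n : K) : ℂ) = 0 := horth y n n.2
        have := norm_sub_sq (𝕜 := ℂ) (S y) (n : K)
        rw [h0] at this
        simp only [map_zero] at this
        nlinarith [sq_nonneg ‖(n : K)‖]
      exact (pow_le_pow_iff_left₀ (norm_nonneg _) (norm_nonneg _) two_ne_zero).mp hsq
  -- ‖T ∘ S‖ ≤ 1
  have hTS1 : ‖T.comp S‖ ≤ 1 := by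
    have hidem : (T.comp S).comp (T.comp S) = T.comp S := by
      ext y
      simp [hTST]
    have hadj3 : ContinuousLinearMap.adjoint (T.comp S) = T.comp S :=
      ContinuousLinearMap.isSelfAdjoint_iff'.mp h3
    have h := ContinuousLinearMap.norm_adjoint_comp_self (T.comp S)
    rw [hadj3] at h
    have : ‖T.comp S‖ = ‖T.comp S‖ * ‖T.comp S‖ := by
      rw [← h]
      exact congrArg norm hidem.symm
    nlinarith [norm_nonneg (T.comp S)]
  have hTSle : ∀ y : H, ‖T (S y)‖ ≤ ‖y‖ := by
    intro y
    have := (T.comp S).le_opNorm y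
    rw [ContinuousLinearMap.comp_apply] at this
    calc ‖T (S y)‖ ≤ ‖T.comp S‖ * ‖y‖ := this
      _ ≤ 1 * ‖y‖ := by
          exact mul_le_mul_of_nonneg_right hTS1 (norm_nonneg _)
      _ = ‖y‖ := one_mul _
  -- lower bound for the ratios
  have hlow : ∀ ξ : K, ξ ∉ LinearMap.ker (T : K →ₗ[ℂ] H) →
      1 / ‖S‖ ≤ ‖T ξ‖ / Metric.infDist ξ N := by
    intro ξ hξ
    have hdpos : 0 < Metric.infDist ξ N :=
      (hNc.notMem_iff_infDist_pos hNne).mp hξ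
    have hmem : ξ - S (T ξ) ∈ N := by
      show ξ - S (T ξ) ∈ LinearMap.ker (T : K →ₗ[ℂ] H)
      rw [LinearMap.mem_ker]
      simp [hTST]
    have hle : Metric.infDist ξ N ≤ ‖S‖ * ‖T ξ‖ := by
      calc Metric.infDist ξ N ≤ dist ξ (ξ - S (T ξ)) := Metric.infDist_le_dist_of_mem hmem
        _ = ‖S (T ξ)‖ := by rw [dist_eq_norm]; simp
        _ ≤ ‖S‖ * ‖T ξ‖ := S.le_opNorm _
    rw [div_le_div_iff₀ hSpos hdpos, one_mul]
    linarith [hle]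
  set A : Set ℝ := ((fun ξ => ‖T ξ‖ / Metric.infDist ξ (LinearMap.ker (T : K →ₗ[ℂ] H) : Set K)) ''
    {ξ : K | ξ ∉ LinearMap.ker (T : K →ₗ[ℂ] H)}) with hA
  have hbdd : BddBelow A := by
    refine ⟨1 / ‖S‖, ?_⟩
    rintro a ⟨ξ, hξ, rfl⟩
    exact hlow ξ hξ
  have hne : A.Nonempty := by
    have : ∃ x : K, T x ≠ 0 := by
      by_contra h
      push_neg at h
      exact hT (ContinuousLinearMap.ext fun x => by simp [h x])
    obtain ⟨x, hx⟩ := this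
    exact ⟨_, ⟨x, fun hm => hx hm, rfl⟩⟩
  have hlower : 1 / ‖S‖ ≤ sInf A := le_csInf hne (by rintro a ⟨ξ, hξ, rfl⟩; exact hlow ξ hξ)
  have hupper : sInf A ≤ 1 / ‖S‖ := by
    refine le_of_forall_gt_imp_ge_of_dense fun r hr => ?_
    have hrpos : 0 < r := lt_trans (by positivity) hr
    have hrS : 1 / r < ‖S‖ := by
      rw [div_lt_iff₀ hrpos, mul_comm]
      rw [div_lt_iff₀ hSpos] at hr
      linarith
    obtain ⟨η, hη1, hη2⟩ := S.exists_lt_apply_of_lt_opNorm hrS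
    have hSη : 0 < ‖S η‖ := lt_trans (by positivity) hη2
    have hmemA : S η ∉ LinearMap.ker (T : K →ₗ[ℂ] H) := by
      intro hm
      have : S (T (S η)) = 0 := by rw [show T (S η) = 0 from LinearMap.mem_ker.mp hm, map_zero]
      rw [hSTS] at this
      rw [this] at hSη
      simp at hSη
    have helem : ‖T (S η)‖ / Metric.infDist (S η) N ∈ A := ⟨S η, hmemA, rfl⟩
    have hratio : ‖T (S η)‖ / Metric.infDist (S η) N ≤ r := by
      rw [hdist]
      calc ‖T (S η)‖ / ‖S η‖ ≤ ‖η‖ / ‖S η‖ := by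
            gcongr
            exact hTSle η
        _ ≤ r := by
            rw [div_le_iff₀ hSη]
            have h1r : r * (1 / r) = 1 := by field_simp
            have hm := mul_lt_mul_of_pos_left hη2 hrpos
            rw [h1r] at hm
            linarith
    exact le_trans (csInf_le hbdd helem) hratio
  have hrmm : rmm T = 1 / ‖S‖ := le_antisymm hupper hlower
  rw [hrmm]
  rw [one_div_one_div]
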